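/- Let A ∈ Z^{t×(t+c-1)} be a degree matrix. The degree of the h-polynomial hp^A equals a_{1,1} + ... + a_{1,c} + a_{2,c+1} + ... + a_{t,t+c-1} - c (the sum of the entries in the first row up to column c plus the entries a_{i,c+i-1} for i = 2,...,t, minus c). -/

import Mathlib

open Polynomial

/-- The polynomial `1 + z + ⋯ + z^(d-1)`. -/
noncomputable def geom (d : ℤ) : Polynomial ℤ :=
  ∑ i ∈ Finset.range d.toNat, Polynomial.X ^ i

/-- The h-polynomial of a standard determinantal ideal with `t × m` degree matrix `A`
(codimension `m - t + 1`), defined via the basic-double-link recursion applied at the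
bottom-right entry, with the conventions `hp = 0` for `t = 0` and `hp = 1` for `m < t`. -/
noncomputable def hp : (t m : ℕ) → Matrix (Fin t) (Fin m) ℤ → Polynomial ℤ
  | 0, _, _ => 0
  | _ + 1, 0, _ => 1
  | t + 1, m + 1, A =>
    if m + 1 ≤ t then 1
    else
      Polynomial.X ^ (A (Fin.last t) (Fin.last m)).toNat *
          hp t m (fun i j => A i.castSucc j.castSucc) +
        geom (A (Fin.last t) (Fin.last m)) * hp (t + 1) m (fun i j => A i j.castSucc)
  termination_by t m => (t, m)

/-- Delete row `k` and column `l` of a matrix. -/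
def delRC {t m : ℕ} (A : Matrix (Fin (t + 1)) (Fin (m + 1)) ℤ)
    (k : Fin (t + 1)) (l : Fin (m + 1)) : Matrix (Fin t) (Fin m) ℤ :=
  fun i j => A (k.succAbove i) (l.succAbove j)

/-- Delete column `l` of a matrix. -/
def delC {t m : ℕ} (A : Matrix (Fin t) (Fin (m + 1)) ℤ) (l : Fin (m + 1)) :
    Matrix (Fin t) (Fin m) ℤ :=
  fun i j => A i (l.succAbove j)

/-- `A` is a degree matrix: homogeneous (`a_{i,j} = b_j - a_i`), entries weakly increasing
left-to-right and bottom-to-top, and positive on the main diagonal. -/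
def IsDegreeMatrix {a b : ℕ} (A : Matrix (Fin a) (Fin b) ℤ) : Prop :=
  (∃ (α : Fin a → ℤ) (β : Fin b → ℤ), ∀ i j, A i j = β j - α i) ∧
    (∀ (i : Fin a) (j j' : Fin b), j ≤ j' → A i j ≤ A i j') ∧
    (∀ (i i' : Fin a) (j : Fin b), i ≤ i' → A i' j ≤ A i j) ∧
    (∀ (i : Fin a) (h : (i : ℕ) < b), 0 < A i ⟨i, h⟩)

/-- Binomial coefficient with integer top argument, with the convention that it vanishes
whenever the top argument is negative or smaller than the bottom one. -/
def ch (a : ℤ) (b : ℕ) : ℤ := if a < 0 then 0 else (a.toNat).choose b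

/-- `h : ℕ → ℤ` is a pure O-sequence: it is the f-vector (counting monomials by degree)
of a nonempty finite order ideal of monomials all of whose maximal elements have the
same degree. -/
def IsPureOSequence (h : ℕ → ℤ) : Prop :=
  ∃ (N : ℕ) (Γ : Finset (Fin N → ℕ)),
    Γ.Nonempty ∧
      (∀ μ ∈ Γ, ∀ ν : Fin N → ℕ, ν ≤ μ → ν ∈ Γ) ∧
      (∃ d : ℕ, ∀ μ ∈ Γ, (∀ ν ∈ Γ, μ ≤ ν → μ = ν) → ∑ j, μ j = d) ∧
      (∀ i : ℕ, ((Γ.filter fun μ => ∑ j, μ j = i).card : ℤ) = h i)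

/-! auxiliary -/

lemma geom_coeff (d : ℤ) (k : ℕ) : (geom d).coeff k = if k < d.toNat then 1 else 0 := by
  simp [geom, Polynomial.finset_sum_coeff, Polynomial.coeff_X_pow]

lemma geom_coeff_nonneg (d : ℤ) (k : ℕ) : 0 ≤ (geom d).coeff k := by
  rw [geom_coeff]; split <;> norm_num

lemma geom_ne_zero (d : ℤ) (hd : 0 < d) : geom d ≠ 0 := by
  intro h
  have := geom_coeff d 0
  rw [h] at this
  simp [show (0:ℕ) < d.toNat by omega] at this

lemma geom_natDegree (d : ℤ) (hd : 0 < d) : (geom d).natDegree = d.toNat - 1 := by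
  apply le_antisymm
  · apply Polynomial.natDegree_le_iff_coeff_eq_zero.2
    intro N hN
    rw [geom_coeff, if_neg (by omega)]
  · apply Polynomial.le_natDegree_of_ne_zero
    rw [geom_coeff, if_pos (by omega)]
    norm_num

lemma posadd (p q : Polynomial ℤ) (hp0 : p ≠ 0)
    (hpc : ∀ k, 0 ≤ p.coeff k) (hqc : ∀ k, 0 ≤ q.coeff k)
    (hdeg : q.natDegree ≤ p.natDegree) :
    (p + q) ≠ 0 ∧ (∀ k, 0 ≤ (p+q).coeff k) ∧ (p + q).natDegree = p.natDegree := by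
  have hco : 0 < (p+q).coeff p.natDegree := by
    rw [Polynomial.coeff_add]
    have h1 : p.coeff p.natDegree ≠ 0 := by
      have := Polynomial.leadingCoeff_ne_zero.2 hp0
      rwa [Polynomial.leadingCoeff] at this
    have h2 : 0 < p.coeff p.natDegree := lt_of_le_of_ne (hpc _) (Ne.symm h1)
    linarith [hqc p.natDegree]
  refine ⟨?_, ?_, ?_⟩
  · intro h; rw [h] at hco; simp at hco
  · intro k; rw [Polynomial.coeff_add]; exact add_nonneg (hpc k) (hqc k)
  · apply le_antisymm
    · exact (Polynomial.natDegree_add_le p q).trans (by omega)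
    · exact Polynomial.le_natDegree_of_ne_zero (ne_of_gt hco)

lemma posmul (p q : Polynomial ℤ) (hp0 : p ≠ 0) (hq0 : q ≠ 0)
    (hpc : ∀ k, 0 ≤ p.coeff k) (hqc : ∀ k, 0 ≤ q.coeff k) :
    (p * q) ≠ 0 ∧ (∀ k, 0 ≤ (p*q).coeff k) ∧ (p * q).natDegree = p.natDegree + q.natDegree := by
  refine ⟨mul_ne_zero hp0 hq0, ?_, Polynomial.natDegree_mul hp0 hq0⟩
  intro k
  rw [Polynomial.coeff_mul]
  exact Finset.sum_nonneg fun x _ => mul_nonneg (hpc _) (hqc _)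

/-- entry of a matrix by natural indices, 0 out of range -/
def ent {r c : ℕ} (A : Matrix (Fin r) (Fin c) ℤ) (i j : ℕ) : ℤ :=
  if h : i < r ∧ j < c then A ⟨i, h.1⟩ ⟨j, h.2⟩ else 0

lemma ent_delC {r s : ℕ} (A : Matrix (Fin r) (Fin (s+1)) ℤ) (i j : ℕ) (hj : j < s) :
    ent (fun i j => A i j.castSucc) i j = ent A i j := by
  unfold ent
  by_cases hi : i < r
  · rw [dif_pos ⟨hi, hj⟩, dif_pos ⟨hi, by omega⟩]; rfl
  · rw [dif_neg (by tauto), dif_neg (by tauto)]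

lemma ent_delRC {r s : ℕ} (A : Matrix (Fin (r+1)) (Fin (s+1)) ℤ) (i j : ℕ)
    (hi : i < r) (hj : j < s) :
    ent (fun i j => A i.castSucc j.castSucc) i j = ent A i j := by
  unfold ent
  rw [dif_pos ⟨hi, hj⟩, dif_pos ⟨by omega, by omega⟩]; rfl

lemma degM_delC {a b : ℕ} (A : Matrix (Fin a) (Fin (b+1)) ℤ)
    (h : IsDegreeMatrix A) : IsDegreeMatrix (fun i j => A i j.castSucc) := by
  obtain ⟨⟨α, β, hab⟩, hcol, hrow, hdiag⟩ := h
  refine ⟨⟨α, fun j => β j.castSucc, fun i j => hab i j.castSucc⟩, ?_, ?_, ?_⟩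
  · intro i j j' hj
    exact hcol i _ _ (Fin.castSucc_le_castSucc_iff.mpr hj)
  · intro i i' j hi; exact hrow i i' _ hi
  · intro i hi
    exact hdiag i (by omega)

lemma degM_delRC {a b : ℕ} (A : Matrix (Fin (a+1)) (Fin (b+1)) ℤ)
    (h : IsDegreeMatrix A) : IsDegreeMatrix (fun i j => A i.castSucc j.castSucc) := by
  obtain ⟨⟨α, β, hab⟩, hcol, hrow, hdiag⟩ := h
  refine ⟨⟨fun i => α i.castSucc, fun j => β j.castSucc,
      fun i j => hab i.castSucc j.castSucc⟩, ?_, ?_, ?_⟩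
  · intro i j j' hj
    exact hcol _ _ _ (Fin.castSucc_le_castSucc_iff.mpr hj)
  · intro i i' j hi
    exact hrow _ _ _ (Fin.castSucc_le_castSucc_iff.mpr hi)
  · intro i hi
    exact hdiag i.castSucc (by rw [Fin.coe_castSucc]; omega)

lemma hp_main : ∀ (m t : ℕ), t ≤ m → ∀ (A : Matrix (Fin (t+1)) (Fin (m+1)) ℤ),
    IsDegreeMatrix A →
    hp (t+1) (m+1) A ≠ 0 ∧ (∀ k, 0 ≤ (hp (t+1) (m+1) A).coeff k) ∧
    ((hp (t+1) (m+1) A).natDegree : ℤ) =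
      (∑ j ∈ Finset.range (m-t+1), ent A 0 j) +
      (∑ i ∈ Finset.range t, ent A (i+1) (m-t+i+1)) - ((m-t+1 : ℕ) : ℤ) := by
  intro m
  induction m using Nat.strong_induction_on with
  | _ m IH =>
  intro t htm A hA
  obtain ⟨⟨α, β, hab⟩, hcol, hrow, hdiag⟩ := id hA
  -- positivity of the bottom-right entry
  have ha : 0 < A (Fin.last t) (Fin.last m) := by
    have h1 : 0 < A (Fin.last t) ⟨t, by omega⟩ := hdiag (Fin.last t) (by rw [Fin.val_last]; omega)
    have h2 : A (Fin.last t) ⟨t, by omega⟩ ≤ A (Fin.last t) (Fin.last m) :=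
      hcol _ _ _ (by rw [Fin.le_def, Fin.val_last]; omega)
    linarith
  have heq : hp (t+1) (m+1) A =
      Polynomial.X ^ (A (Fin.last t) (Fin.last m)).toNat *
        hp t m (fun i j => A i.castSucc j.castSucc) +
        geom (A (Fin.last t) (Fin.last m)) * hp (t+1) m (fun i j => A i j.castSucc) := by
    rw [hp, if_neg (by omega)]
  rcases t with _ | s
  · -- one row
    have h0 : hp 0 m (fun i j => A i.castSucc j.castSucc) = 0 := by exact hp.eq_1 _ _
    simp only [h0, mul_zero, zero_add] at heq
    rcases m with _ | m''
    · -- 1 × 1 matrix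
      have h1 : hp 1 0 (fun (i : Fin 1) (j : Fin 0) => A i j.castSucc) = 1 := by exact hp.eq_2 _ _
      simp only [h1, mul_one] at heq
      rw [heq]
      refine ⟨geom_ne_zero _ ha, geom_coeff_nonneg _, ?_⟩
      rw [geom_natDegree _ ha]
      have he : ent A 0 0 = A (Fin.last 0) (Fin.last 0) := by
        unfold ent; rw [dif_pos ⟨by omega, by omega⟩]; rfl
      have hs : ∑ j ∈ Finset.range (0-0+1), ent A 0 j = ent A 0 0 := by
        show ∑ j ∈ Finset.range 1, ent A 0 j = ent A 0 0
        exact Finset.sum_range_one _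
      have hs2 : (∑ i ∈ Finset.range 0, ent A (i+1) (0-0+i+1)) = 0 :=
        Finset.sum_range_zero _
      rw [hs, hs2, he]
      omega
    · -- 1 × (m''+2) matrix
      obtain ⟨hC1, hC2, hC3⟩ := IH m'' (by omega) 0 (by omega)
        (fun i j => A i j.castSucc) (degM_delC A hA)
      simp only [Nat.sub_zero, Finset.range_zero, Finset.sum_empty, add_zero] at hC3 ⊢
      obtain ⟨hM1, hM2, hM3⟩ := posmul (geom (A (Fin.last 0) (Fin.last (m''+1))))
        (hp (0+1) (m''+1) (fun i j => A i j.castSucc)) (geom_ne_zero _ ha) hC1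
        (geom_coeff_nonneg _) hC2
      rw [heq]
      refine ⟨hM1, hM2, ?_⟩
      rw [hM3, geom_natDegree _ ha]
      have hsum : ∑ j ∈ Finset.range (m''+1), ent (fun (i : Fin 1) j => A i j.castSucc) 0 j
          = ∑ j ∈ Finset.range (m''+1), ent A 0 j :=
        Finset.sum_congr rfl fun j hj => ent_delC A 0 j (Finset.mem_range.1 hj)
      rw [hsum] at hC3
      have hlast : ent A 0 (m''+1) = A (Fin.last 0) (Fin.last (m''+1)) := by
        unfold ent; rw [dif_pos ⟨by omega, by omega⟩]; rfl
      rw [Finset.sum_range_succ, hlast]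
      omega
  · -- at least two rows
    rcases m with _ | m''
    · omega
    have hsm : s ≤ m'' := by omega
    -- first recursive term, via IH on the (s+1)×(m''+1) top-left submatrix
    obtain ⟨hB1, hB2, hB3⟩ := IH m'' (by omega) s hsm
      (fun i j => A i.castSucc j.castSucc) (degM_delRC A hA)
    have hXc : ∀ k, 0 ≤ ((Polynomial.X : Polynomial ℤ) ^
        (A (Fin.last (s+1)) (Fin.last (m''+1))).toNat).coeff k := by
      intro k; rw [Polynomial.coeff_X_pow]; split <;> norm_num
    obtain ⟨hF1, hF2, hF3⟩ := posmul (Polynomial.X ^ (A (Fin.last (s+1)) (Fin.last (m''+1))).toNat)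
      (hp (s+1) (m''+1) (fun i j => A i.castSucc j.castSucc))
      (pow_ne_zero _ Polynomial.X_ne_zero) hB1 hXc hB2
    rw [Polynomial.natDegree_X_pow] at hF3
    -- rewrite the IH1 sums as sums of entries of A
    have hs1 : ∑ j ∈ Finset.range (m''-s+1),
        ent (fun (i : Fin (s+1)) (j : Fin (m''+1)) => A i.castSucc j.castSucc) 0 j
        = ∑ j ∈ Finset.range (m''-s+1), ent A 0 j := by
      refine Finset.sum_congr rfl fun j hj => ?_
      rw [Finset.mem_range] at hj
      exact ent_delRC A 0 j (by omega) (by omega)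
    have hs2 : ∑ i ∈ Finset.range s,
        ent (fun (i : Fin (s+1)) (j : Fin (m''+1)) => A i.castSucc j.castSucc) (i+1) (m''-s+i+1)
        = ∑ i ∈ Finset.range s, ent A (i+1) (m''-s+i+1) := by
      refine Finset.sum_congr rfl fun i hi => ?_
      rw [Finset.mem_range] at hi
      exact ent_delRC A (i+1) (m''-s+i+1) (by omega) (by omega)
    rw [hs1, hs2] at hB3
    have hlast : ent A (s+1) (m''-s+s+1) = A (Fin.last (s+1)) (Fin.last (m''+1)) := by
      rw [show m''-s+s+1 = m''+1 by omega]
      unfold ent; rw [dif_pos ⟨by omega, by omega⟩]; rfl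
    -- cast degree of first term
    have hcast1 : (((A (Fin.last (s+1)) (Fin.last (m''+1))).toNat +
        (hp (s+1) (m''+1) (fun i j => A i.castSucc j.castSucc)).natDegree : ℕ) : ℤ)
        = (∑ j ∈ Finset.range (m''-s+1), ent A 0 j) +
          (∑ i ∈ Finset.range (s+1), ent A (i+1) (m''-s+i+1)) - ((m''-s+1 : ℕ) : ℤ) := by
      rw [Finset.sum_range_succ (fun i => ent A (i+1) (m''-s+i+1)) s, hlast]
      push_cast
      rw [Int.toNat_of_nonneg ha.le, hB3]
      push_cast
      ring
    rw [show m''+1-(s+1) = m''-s from by omega]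
    rw [heq]
    -- now split on whether the right submatrix is square-ish (c = 0) or not
    by_cases hsm' : s + 1 ≤ m''
    · -- codimension still positive after deleting the column
      obtain ⟨hD1, hD2, hD3⟩ := IH m'' (by omega) (s+1) hsm'
        (fun i j => A i j.castSucc) (degM_delC A hA)
      obtain ⟨hG1, hG2, hG3⟩ := posmul (geom (A (Fin.last (s+1)) (Fin.last (m''+1))))
        (hp (s+1+1) (m''+1) (fun i j => A i j.castSucc)) (geom_ne_zero _ ha) hD1
        (geom_coeff_nonneg _) hD2
      rw [geom_natDegree _ ha] at hG3
      have hs3 : ∑ j ∈ Finset.range (m''-(s+1)+1),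
          ent (fun (i : Fin (s+1+1)) (j : Fin (m''+1)) => A i j.castSucc) 0 j
          = ∑ j ∈ Finset.range (m''-(s+1)+1), ent A 0 j := by
        refine Finset.sum_congr rfl fun j hj => ?_
        rw [Finset.mem_range] at hj
        exact ent_delC A 0 j (by omega)
      have hs4 : ∑ i ∈ Finset.range (s+1),
          ent (fun (i : Fin (s+1+1)) (j : Fin (m''+1)) => A i j.castSucc) (i+1) (m''-(s+1)+i+1)
          = ∑ i ∈ Finset.range (s+1), ent A (i+1) (m''-(s+1)+i+1) := by
        refine Finset.sum_congr rfl fun i hi => ?_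
        rw [Finset.mem_range] at hi
        exact ent_delC A (i+1) (m''-(s+1)+i+1) (by omega)
      rw [hs3, hs4] at hD3
      -- extended row/column functions for the telescoping argument
      obtain ⟨bb, hbb⟩ : ∃ f : ℕ → ℤ, ∀ j (h : j < m''+2), f j = β ⟨j, h⟩ :=
        ⟨fun j => if h : j < m''+2 then β ⟨j, h⟩ else 0, fun j h => dif_pos h⟩
      obtain ⟨aa, haa⟩ : ∃ f : ℕ → ℤ, ∀ i (h : i < s+2), f i = α ⟨i, h⟩ :=
        ⟨fun i => if h : i < s+2 then α ⟨i, h⟩ else 0, fun i h => dif_pos h⟩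
      have entv : ∀ i j, (hi : i < s+2) → (hj : j < m''+2) → ent A i j = bb j - aa i := by
        intro i j hi hj
        unfold ent
        rw [dif_pos ⟨hi, hj⟩, hab, hbb j hj, haa i hi]
      set c' := m'' - (s+1) with hc'
      have hcc : m'' - s = c' + 1 := by omega
      have hdiff : (∑ i ∈ Finset.range (s+1), ent A (i+1) (m''-s+i+1)) -
          (∑ i ∈ Finset.range (s+1), ent A (i+1) (c'+i+1))
          = bb (c'+1+(s+1)) - bb (c'+1+0) := by
        rw [← Finset.sum_sub_distrib, ← Finset.sum_range_sub (fun i => bb (c'+1+i)) (s+1)]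
        refine Finset.sum_congr rfl fun i hi => ?_
        rw [Finset.mem_range] at hi
        rw [entv _ _ (by omega) (by omega), entv _ _ (by omega) (by omega)]
        rw [show m''-s+i+1 = c'+1+(i+1) from by omega, show c'+i+1 = c'+1+i from by omega]
        ring
      have ea : A (Fin.last (s+1)) (Fin.last (m''+1)) = bb (m''+1) - aa (s+1) := by
        rw [hbb _ (by omega), haa _ (by omega)]
        exact hab (Fin.last (s+1)) (Fin.last (m''+1))
      have ec : ent A 0 (c'+1) = bb (c'+1) - aa 0 := entv 0 (c'+1) (by omega) (by omega)
      have halpha : aa 0 ≤ aa (s+1) := by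
        have h := hrow ⟨0, by omega⟩ ⟨s+1, by omega⟩ ⟨0, by omega⟩ (Fin.mk_le_mk.mpr (by omega))
        simp only [hab] at h
        rw [haa 0 (by omega), haa (s+1) (by omega)]
        linarith
      -- degree of second term (ℤ)
      have hcast2 : ((((A (Fin.last (s+1)) (Fin.last (m''+1))).toNat - 1) +
          (hp (s+1+1) (m''+1) (fun i j => A i j.castSucc)).natDegree : ℕ) : ℤ)
          = A (Fin.last (s+1)) (Fin.last (m''+1)) - 1 +
            ((∑ j ∈ Finset.range (c'+1), ent A 0 j) +
             (∑ i ∈ Finset.range (s+1), ent A (i+1) (c'+i+1)) - ((c'+1 : ℕ) : ℤ)) := by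
        have h1 : 1 ≤ (A (Fin.last (s+1)) (Fin.last (m''+1))).toNat := by omega
        push_cast [Nat.cast_sub h1]
        rw [Int.toNat_of_nonneg ha.le, hD3]
        push_cast
        ring
      -- key inequality between the two degrees
      have hkey : ((A (Fin.last (s+1)) (Fin.last (m''+1))).toNat - 1) +
          (hp (s+1+1) (m''+1) (fun i j => A i j.castSucc)).natDegree ≤
          (A (Fin.last (s+1)) (Fin.last (m''+1))).toNat +
          (hp (s+1) (m''+1) (fun i j => A i.castSucc j.castSucc)).natDegree := by
        have hZ : ((((A (Fin.last (s+1)) (Fin.last (m''+1))).toNat - 1) +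
            (hp (s+1+1) (m''+1) (fun i j => A i j.castSucc)).natDegree : ℕ) : ℤ) ≤
            (((A (Fin.last (s+1)) (Fin.last (m''+1))).toNat +
            (hp (s+1) (m''+1) (fun i j => A i.castSucc j.castSucc)).natDegree : ℕ) : ℤ) := by
          rw [hcast1, hcast2]
          -- reduce to the telescoping identity
          have hsplit : ∑ j ∈ Finset.range (m''-s+1), ent A 0 j
              = (∑ j ∈ Finset.range (c'+1), ent A 0 j) + ent A 0 (c'+1) := by
            rw [hcc, Finset.sum_range_succ]
          have hc1 : c'+1+(s+1) = m''+1 := by omega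
          have hc0 : c'+1+0 = c'+1 := by omega
          rw [hc1, hc0] at hdiff
          have hZc : ((m''-s+1 : ℕ) : ℤ) = (c' : ℤ) + 2 := by omega
          have hZd : ((c'+1 : ℕ) : ℤ) = (c' : ℤ) + 1 := by omega
          rw [hsplit, hZc, hZd]
          linarith [hdiff, ea, ec, halpha]
        exact_mod_cast hZ
      obtain ⟨hT1, hT2, hT3⟩ := posadd _ _ hF1 hF2 hG2 (by rw [hF3, hG3]; exact hkey)
      refine ⟨hT1, hT2, ?_⟩
      rw [hT3, hF3]
      exact hcast1
    · -- the deleted-column matrix is square: second factor is geom * 1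
      have h1 : hp (s+1+1) (m''+1) (fun (i : Fin (s+1+1)) (j : Fin (m''+1)) => A i j.castSucc)
          = 1 := by
        exact (hp.eq_3 _ _ _).trans (if_pos (by omega))
      rw [h1, mul_one]
      obtain ⟨hT1, hT2, hT3⟩ := posadd _ _ hF1 hF2 (geom_coeff_nonneg _)
        (by rw [hF3, geom_natDegree _ ha]; omega)
      refine ⟨hT1, hT2, ?_⟩
      rw [hT3, hF3]
      exact hcast1

/-- The degree of the h-polynomial of a degree matrix `A ∈ ℤ^{(t+1)×(t+c+1)}` (codimension
`c+1`) equals `a_{1,1} + ⋯ + a_{1,c+1} + a_{2,c+2} + ⋯ + a_{t+1,t+c+1} - (c+1)`. -/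
theorem hp_natDegree (t c : ℕ) (A : Matrix (Fin (t + 1)) (Fin (t + c + 1)) ℤ)
    (hA : IsDegreeMatrix A) :
    ((hp (t + 1) (t + c + 1) A).natDegree : ℤ) =
      (∑ j : Fin (c + 1), A 0 (Fin.castLE (by omega) j)) +
        (∑ i : Fin t, A ⟨i.val + 1, by omega⟩ ⟨c + i.val + 1, by omega⟩) - (c + 1) := by
  have h := (hp_main (t + c) t (by omega) A hA).2.2
  have hc : t + c - t = c := by omega
  rw [hc] at h
  rw [h]
  have h1 : ∑ j ∈ Finset.range (c+1), ent A 0 j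
      = ∑ j : Fin (c + 1), A 0 (Fin.castLE (by omega) j) := by
    rw [← Fin.sum_univ_eq_sum_range (fun j => ent A 0 j) (c+1)]
    refine Finset.sum_congr rfl fun j _ => ?_
    show ent A 0 (j : ℕ) = _
    unfold ent
    rw [dif_pos ⟨by omega, by omega⟩]
    rfl
  have h2 : ∑ i ∈ Finset.range t, ent A (i+1) (c+i+1)
      = ∑ i : Fin t, A ⟨i.val + 1, by omega⟩ ⟨c + i.val + 1, by omega⟩ := by
    rw [← Fin.sum_univ_eq_sum_range (fun i => ent A (i+1) (c+i+1)) t]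
    refine Finset.sum_congr rfl fun i _ => ?_
    show ent A ((i:ℕ)+1) (c+(i:ℕ)+1) = _
    unfold ent
    rw [dif_pos ⟨by omega, by omega⟩]
  rw [h1, h2]
  push_cast
  ring
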